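/- Let β ∈ ℤ^m with |β| = 2k ≥ 0, k ∈ ℕ. Then P_q^{C_m}(β) = Σ_{δ∈C_k^m} c_δ^{C_m} q^k P_q^{A_m}(β−δ) and P_q^{D_m}(β) = Σ_{δ∈D_k^m} c_δ^{D_m} q^k P_q^{A_m}(β−δ). -/

import Mathlib

open scoped BigOperators

noncomputable section

/-- Integral weights of rank `m`, identified with `ℤ^m`. -/
abbrev Wt (m : ℕ) := Fin m → ℤ

/-- Rational weights of rank `m` (needed for the half-integral `ρ` of type `B`). -/
abbrev QWt (m : ℕ) := Fin m → ℚ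

/-- Coercion of an integral weight to a rational weight. -/
def castWt {m : ℕ} (β : Wt m) : QWt m := fun i => (β i : ℚ)

/-- The standard basis vector `ε_i` of `ℤ^m`. -/
def eps {m : ℕ} (i : Fin m) : Wt m := fun j => if j = i then 1 else 0

/-- `ρ_m = (m, m-1, ..., 1)`. -/
def rhoZ (m : ℕ) : Wt m := fun i => (m : ℤ) - (i : ℕ)

/-- `κ_m = (1, ..., 1)`. -/
def kappa (m : ℕ) : Wt m := fun _ => 1

/-- A partition of length `m`: a weakly decreasing element of `ℕ^m` (written in `ℤ^m`). -/
def IsPart {m : ℕ} (lam : Wt m) : Prop := Antitone lam ∧ ∀ i, 0 ≤ lam i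

/-- `|λ| = λ_1 + ⋯ + λ_m`. -/
def wtSum {m : ℕ} (lam : Wt m) : ℤ := ∑ i, lam i

/-- The conjugate partition, regarded as a partition of length `n`:
`λ'_j = #{i : λ_i ≥ j}` (with `j` one-based). -/
def conj {m : ℕ} (n : ℕ) (lam : Wt m) : Wt n :=
  fun j => ((Finset.univ.filter (fun i : Fin m => ((j : ℕ) : ℤ) < lam i)).card : ℤ)

/-- The permutation action of `S_m` on `ℤ^m`. -/
def pact {m : ℕ} (σ : Equiv.Perm (Fin m)) (β : Wt m) : Wt m := β ∘ σ.symm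

/-- The permutation action of `S_m` on `ℚ^m`. -/
def qpact {m : ℕ} (σ : Equiv.Perm (Fin m)) (β : QWt m) : QWt m := β ∘ σ.symm

/-- The dot action `σ ∘ α = σ(α + ρ_m) - ρ_m`. -/
def dotAct {m : ℕ} (σ : Equiv.Perm (Fin m)) (α : Wt m) : Wt m :=
  pact σ (α + rhoZ m) - rhoZ m

/-- The three root-system types considered in the paper. -/
inductive RT | B | C | D
deriving DecidableEq

/-- The action of a signed permutation `(σ, ε)` on `ℚ^m`: the hyperoctahedral group
`W_{B_m} = W_{C_m}` consists of all such pairs. -/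
def sact {m : ℕ} (σ : Equiv.Perm (Fin m)) (ε : Fin m → Bool) (β : QWt m) : QWt m :=
  fun i => (if ε i then -1 else 1) * β (σ.symm i)

/-- `(-1)^{l(w)}` for a signed permutation `w = (σ, ε)`: the sign character of the
hyperoctahedral group, which takes value `-1` on each Coxeter generator. -/
def ssign {m : ℕ} (σ : Equiv.Perm (Fin m)) (ε : Fin m → Bool) : ℤ :=
  (Equiv.Perm.sign σ : ℤ) * ∏ i, (if ε i then -1 else 1)

/-- Which signed permutations belong to the Weyl group of type `g`: for `B` and `C` all of
them, for `D` only those changing an even number of signs. -/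
def allowed (g : RT) {m : ℕ} (ε : Fin m → Bool) : Prop :=
  g = RT.D → (∏ i, (if ε i then (-1 : ℤ) else 1)) = 1

instance (g : RT) {m : ℕ} : DecidablePred (allowed g (m := m)) := by
  unfold allowed; infer_instance

/-- The Laurent polynomial ring `ℤ[x_1^{±1/2}, ..., x_m^{±1/2}]` (allowing all rational
exponents), realized as the group algebra of `ℚ^m`. -/
abbrev LQ (m : ℕ) := AddMonoidAlgebra ℤ (QWt m)

/-- The monomial `x^β`. -/
def XQ {m : ℕ} (β : QWt m) : LQ m := AddMonoidAlgebra.single β 1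

instance {m : ℕ} : IsDomain (LQ m) := NoZeroDivisors.to_isDomain _

/-- The fraction field of the Laurent polynomial ring, in which Schur functions live. -/
abbrev KK (m : ℕ) := FractionRing (LQ m)

def toK {m : ℕ} (p : LQ m) : KK m := algebraMap (LQ m) (KK m) p

/-- The half-sum of positive roots: `ρ_B = ρ_m - (1/2,…,1/2)`, `ρ_C = ρ_m`,
`ρ_D = ρ_m - (1,…,1)`. -/
def rhoG (g : RT) (m : ℕ) : QWt m :=
  match g with
  | RT.B => fun i => ((m : ℚ) - (i : ℕ)) - 1/2
  | RT.C => fun i => (m : ℚ) - (i : ℕ)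
  | RT.D => fun i => ((m : ℚ) - (i : ℕ)) - 1

/-- `a_β = Σ_{w ∈ W_g} (-1)^{l(w)} x^{w(β)}`. -/
def aalt (g : RT) {m : ℕ} (β : QWt m) : LQ m :=
  ∑ σ : Equiv.Perm (Fin m), ∑ ε ∈ Finset.univ.filter (allowed g),
    ssign σ ε • XQ (sact σ ε β)

/-- The Schur function `s_ν^g = a_{ν+ρ_g} / a_{ρ_g}`. -/
def SchurF (g : RT) {m : ℕ} (ν : QWt m) : KK m :=
  toK (aalt g (ν + rhoG g m)) / toK (aalt g (rhoG g m))

/-- The one-row weight `(k, 0, …, 0)`. -/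
def rowWt (m : ℕ) (k : ℤ) : QWt m := fun i => if (i : ℕ) = 0 then (k : ℚ) else 0

/-- The one-column weight `(1^p, 0^{m-p})`. -/
def colWt (m : ℕ) (p : ℤ) : QWt m := fun i => if ((i : ℕ) : ℤ) < p then 1 else 0

/-- `h_k^g = s_{(k,0,…,0)}^g` for `k ≥ 0`, and `0` for `k < 0`. -/
def hF (g : RT) (m : ℕ) (k : ℤ) : KK m := if 0 ≤ k then SchurF g (rowWt m k) else 0

/-- `H_k^g = h_k^g + h_{k-2}^g + ⋯ + h_{k mod 2}^g` for `k ≥ 0`, and `0` for `k < 0`. -/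
def HF (g : RT) (m : ℕ) (k : ℤ) : KK m :=
  if 0 ≤ k then ∑ j ∈ Finset.range (k.toNat / 2 + 1), hF g m (k - 2 * j) else 0

/-- `e_p^g = s^g_{(1^p,0^{m-p})}` for `0 ≤ p ≤ m`, `e_p^g = e^g_{2m-p}` for `m < p ≤ 2m`,
and `0` otherwise. -/
def eF (g : RT) (m : ℕ) (p : ℤ) : KK m :=
  if 0 ≤ p ∧ p ≤ (m : ℤ) then SchurF g (colWt m p)
  else if (m : ℤ) < p ∧ p ≤ 2 * m then SchurF g (colWt m (2 * m - p))
  else 0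

/-- `E_k^g = e_k^g + e_{k-2}^g + ⋯ + e_{k mod 2}^g` for `k ≥ 0`, and `0` for `k < 0`. -/
def EF (g : RT) (m : ℕ) (k : ℤ) : KK m :=
  if 0 ≤ k then ∑ j ∈ Finset.range (k.toNat / 2 + 1), eF g m (k - 2 * j) else 0

/-- The `m × m` determinant `u_α^g` (in the one-row characters `h^g`). -/
def uDet (g : RT) {m : ℕ} (α : Wt m) : KK m :=
  Matrix.det (Matrix.of fun i j : Fin m =>
    if (j : ℕ) = 0 then hF g m (α i - (i : ℕ))
    else hF g m (α i - (i : ℕ) + (j : ℕ)) + hF g m (α i - (i : ℕ) - (j : ℕ)))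

/-- The `n × n` determinant `v_β^g` (in the one-column characters `e^g` of rank `m`). -/
def vDet (g : RT) (m : ℕ) {n : ℕ} (β : Wt n) : KK m :=
  Matrix.det (Matrix.of fun i j : Fin n =>
    if (j : ℕ) = 0 then eF g m (β i - (i : ℕ))
    else eF g m (β i - (i : ℕ) + (j : ℕ)) + eF g m (β i - (i : ℕ) - (j : ℕ)))

/-- `h_α^g = h^g_{α_1} ⋯ h^g_{α_m}` (and similarly for arbitrary index length). -/
def hProd (g : RT) (m : ℕ) {n : ℕ} (α : Wt n) : KK m := ∏ i, hF g m (α i)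

def HProd (g : RT) (m : ℕ) {n : ℕ} (α : Wt n) : KK m := ∏ i, HF g m (α i)

def eProd (g : RT) (m : ℕ) {n : ℕ} (α : Wt n) : KK m := ∏ i, eF g m (α i)

def EProd (g : RT) (m : ℕ) {n : ℕ} (α : Wt n) : KK m := ∏ i, EF g m (α i)

/-- The Laurent polynomial ring `ℤ[x_1^{±1}, ..., x_m^{±1}]`, realized as the group
algebra of `ℤ^m`. -/
abbrev LZ (m : ℕ) := AddMonoidAlgebra ℤ (Wt m)

/-- The monomial `x^β`. -/
def XZ {m : ℕ} (β : Wt m) : LZ m := AddMonoidAlgebra.single β 1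

/-- `φ_m = ∏_{1≤i<j≤m} (1 - x_i/x_j) · ∏_{1≤r<s≤m} (1 - 1/(x_r x_s))`; its coefficients
are the function `a` (resp. `f_{q=1}` up to expansion conventions). -/
def phiSmall (m : ℕ) : LZ m :=
  (∏ p ∈ Finset.univ.filter (fun p : Fin m × Fin m => p.1 < p.2),
      (1 - XZ (eps p.1 - eps p.2))) *
  (∏ p ∈ Finset.univ.filter (fun p : Fin m × Fin m => p.1 < p.2),
      (1 - XZ (-(eps p.1 + eps p.2))))

/-- `Φ_m = ∏_{1≤i<j≤m} (1 - x_i/x_j) · ∏_{1≤r≤s≤m} (1 - 1/(x_r x_s))`. -/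
def phiBig (m : ℕ) : LZ m :=
  (∏ p ∈ Finset.univ.filter (fun p : Fin m × Fin m => p.1 < p.2),
      (1 - XZ (eps p.1 - eps p.2))) *
  (∏ p ∈ Finset.univ.filter (fun p : Fin m × Fin m => p.1 ≤ p.2),
      (1 - XZ (-(eps p.1 + eps p.2))))

/-- The coefficient `a(γ)` of `x^γ` in `φ_m`. -/
def coeffSmall (m : ℕ) (γ : Wt m) : ℤ := (phiSmall m).coeff γ

/-- The coefficient `A(γ)` of `x^γ` in `Φ_m`. -/
def coeffBig (m : ℕ) (γ : Wt m) : ℤ := (phiBig m).coeff γ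

/-- The generic `q`-partition function attached to a finite family `v` of vectors:
the coefficient of `q^d` counts the families `(n_i)` of nonnegative integers with
`Σ n_i = d` and `Σ n_i v_i = β`.  This encodes the coefficient of `x^β` in the formal
series expansion of `∏_i (1 - q x^{v_i})^{-1}` as a power series in `q`. -/
def PqPS {m : ℕ} {ι : Type} [Fintype ι] (v : ι → Wt m) (β : QWt m) : PowerSeries ℤ :=
  PowerSeries.mk fun d =>
    (Nat.card {n : ι → ℕ // (∑ i, n i) = d ∧ castWt (∑ i, (n i : ℤ) • v i) = β} : ℤ)

/-- The specialization at `q = 1` of `PqPS`: the number of ways to write `β` as a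
nonnegative integral combination of the vectors `v_i`. -/
def POne {m : ℕ} {ι : Type} [Fintype ι] (v : ι → Wt m) (β : Wt m) : ℤ :=
  (Nat.card {n : ι → ℕ // (∑ i, (n i : ℤ) • v i) = β} : ℤ)

/-- Index type for the pairs `1 ≤ i < j ≤ m`. -/
abbrev IdxLT (m : ℕ) := {p : Fin m × Fin m // p.1 < p.2}

/-- Index type for the pairs `1 ≤ i ≤ j ≤ m`. -/
abbrev IdxLE (m : ℕ) := {p : Fin m × Fin m // p.1 ≤ p.2}

/-- The positive roots `ε_i - ε_j` (`i < j`) of type `A_m`. -/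
def rootsA (m : ℕ) : IdxLT m → Wt m := fun p => eps p.1.1 - eps p.1.2

/-- The positive roots of type `B_m`. -/
def rootsB (m : ℕ) : IdxLT m ⊕ IdxLT m ⊕ Fin m → Wt m
  | .inl p => eps p.1.1 - eps p.1.2
  | .inr (.inl p) => eps p.1.1 + eps p.1.2
  | .inr (.inr i) => eps i

/-- The positive roots of type `C_m` (note `2ε_i = ε_i + ε_i`). -/
def rootsC (m : ℕ) : IdxLT m ⊕ IdxLE m → Wt m
  | .inl p => eps p.1.1 - eps p.1.2
  | .inr p => eps p.1.1 + eps p.1.2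

/-- The positive roots of type `D_m`. -/
def rootsD (m : ℕ) : IdxLT m ⊕ IdxLT m → Wt m
  | .inl p => eps p.1.1 - eps p.1.2
  | .inr p => eps p.1.1 + eps p.1.2

/-- The vectors `ε_i - ε_j` (`i < j`) and `-(ε_r + ε_s)` (`r < s`), whose `q`-partition
function is `f_q`. -/
def vfSmall (m : ℕ) : IdxLT m ⊕ IdxLT m → Wt m
  | .inl p => eps p.1.1 - eps p.1.2
  | .inr p => -(eps p.1.1 + eps p.1.2)

/-- The vectors `ε_i - ε_j` (`i < j`) and `-(ε_r + ε_s)` (`r ≤ s`), whose `q`-partition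
function is `F_q`. -/
def vfBig (m : ℕ) : IdxLT m ⊕ IdxLE m → Wt m
  | .inl p => eps p.1.1 - eps p.1.2
  | .inr p => -(eps p.1.1 + eps p.1.2)

/-- `f_q`. -/
def fq {m : ℕ} (β : Wt m) : PowerSeries ℤ := PqPS (vfSmall m) (castWt β)

/-- `F_q`. -/
def Fq {m : ℕ} (β : Wt m) : PowerSeries ℤ := PqPS (vfBig m) (castWt β)

/-- The `q`-analogue of Kostant's partition function, type `A_m`. -/
def PqA {m : ℕ} (β : QWt m) : PowerSeries ℤ := PqPS (rootsA m) β

/-- The `q`-analogue of Kostant's partition function, types `B_m`, `C_m`, `D_m`. -/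
def PqG (g : RT) {m : ℕ} (β : QWt m) : PowerSeries ℤ :=
  match g with
  | RT.B => PqPS (rootsB m) β
  | RT.C => PqPS (rootsC m) β
  | RT.D => PqPS (rootsD m) β

/-- The Kostka–Foulkes polynomial
`K^g_{λ,μ}(q) = Σ_{w ∈ W_g} (-1)^{l(w)} P_q^g(w(λ+ρ_g) - (μ+ρ_g))`. -/
def KF (g : RT) {m : ℕ} (lam mu : QWt m) : PowerSeries ℤ :=
  ∑ σ : Equiv.Perm (Fin m), ∑ ε ∈ Finset.univ.filter (allowed g),
    ssign σ ε • PqG g (sact σ ε (lam + rhoG g m) - (mu + rhoG g m))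

/-- The Kostka–Foulkes polynomial of type `A_m`,
`K^{A_m}_{λ,γ}(q) = Σ_{σ ∈ S_m} (-1)^{l(σ)} P_q^{A_m}(σ(λ+ρ_m) - (γ+ρ_m))`,
defined for arbitrary `γ ∈ ℤ^m`. -/
def KFA {m : ℕ} (lam gamma : Wt m) : PowerSeries ℤ :=
  ∑ σ : Equiv.Perm (Fin m),
    (Equiv.Perm.sign σ : ℤ) • PqA (castWt (pact σ (lam + rhoZ m) - (gamma + rhoZ m)))

/-- `u_{λ,μ}(q) = Σ_{σ ∈ S_m} (-1)^{l(σ)} f_q(σ(λ+ρ_m) - μ - ρ_m)`. -/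
def uP {m : ℕ} (lam mu : Wt m) : PowerSeries ℤ :=
  ∑ σ : Equiv.Perm (Fin m),
    (Equiv.Perm.sign σ : ℤ) • fq (pact σ (lam + rhoZ m) - mu - rhoZ m)

/-- `U_{λ,μ}(q) = Σ_{σ ∈ S_m} (-1)^{l(σ)} F_q(σ(λ+ρ_m) - μ - ρ_m)`. -/
def UP {m : ℕ} (lam mu : Wt m) : PowerSeries ℤ :=
  ∑ σ : Equiv.Perm (Fin m),
    (Equiv.Perm.sign σ : ℤ) • Fq (pact σ (lam + rhoZ m) - mu - rhoZ m)

/-- `f_q` specialized at `q = 1`. -/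
def fOne {m : ℕ} (β : Wt m) : ℤ := POne (vfSmall m) β

/-- `F_q` specialized at `q = 1`. -/
def FOne {m : ℕ} (β : Wt m) : ℤ := POne (vfBig m) β

/-- `u_{λ,μ}(1)`. -/
def uP1 {m : ℕ} (lam mu : Wt m) : ℤ :=
  ∑ σ : Equiv.Perm (Fin m),
    (Equiv.Perm.sign σ : ℤ) * fOne (pact σ (lam + rhoZ m) - mu - rhoZ m)

/-- `U_{λ,μ}(1)`. -/
def UP1 {m : ℕ} (lam mu : Wt m) : ℤ :=
  ∑ σ : Equiv.Perm (Fin m),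
    (Equiv.Perm.sign σ : ℤ) * FOne (pact σ (lam + rhoZ m) - mu - rhoZ m)

/-- `λ̂ = (n - λ_m, …, n - λ_1)`. -/
def hatP {m : ℕ} (n : ℤ) (lam : Wt m) : Wt m := fun i => n - lam i.rev

/-- The involution `I(α_1, …, α_m) = (-α_m, …, -α_1)`. -/
def invI {m : ℕ} (α : Wt m) : Wt m := fun i => -α i.rev

/-- `σ*`, defined by `σ*(k) = σ(m - k + 1)`. -/
def starPerm {m : ℕ} (σ : Equiv.Perm (Fin m)) : Equiv.Perm (Fin m) :=
  (Fin.revPerm).trans σ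

/-- The number of ways to write `β = Σ_{1≤r≤s≤m} e_{r,s} (ε_r + ε_s)`, `e_{r,s} ∈ ℕ`. -/
def cC (m : ℕ) (β : Wt m) : ℕ :=
  Nat.card {e : IdxLE m → ℕ // (∑ p, (e p : ℤ) • (eps p.1.1 + eps p.1.2)) = β}

/-- The number of ways to write `β = Σ_{1≤r<s≤m} e_{r,s} (ε_r + ε_s)`, `e_{r,s} ∈ ℕ`. -/
def cD (m : ℕ) (β : Wt m) : ℕ :=
  Nat.card {e : IdxLT m → ℕ // (∑ p, (e p : ℤ) • (eps p.1.1 + eps p.1.2)) = β}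

/-- The set `C_k^m`. -/
def setC (m k : ℕ) : Set (Wt m) :=
  {β | (∃ e : IdxLE m → ℕ, (∑ p, (e p : ℤ) • (eps p.1.1 + eps p.1.2)) = β) ∧
       wtSum β = 2 * k}

/-- The set `D_k^m`. -/
def setD (m k : ℕ) : Set (Wt m) :=
  {β | (∃ e : IdxLT m → ℕ, (∑ p, (e p : ℤ) • (eps p.1.1 + eps p.1.2)) = β) ∧
       wtSum β = 2 * k}


section Stmt18Aux

lemma castWt_injective {m : ℕ} : Function.Injective (castWt (m := m)) := by
  intro a b h
  funext i
  have := congrFun h i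
  simpa [castWt] using this

lemma wtSum_add' {m : ℕ} (x y : Wt m) : wtSum (x + y) = wtSum x + wtSum y := by
  simp [wtSum, Finset.sum_add_distrib]

lemma wtSum_sum' {m : ℕ} {ι : Type*} [Fintype ι] (f : ι → Wt m) :
    wtSum (∑ p, f p) = ∑ p, wtSum (f p) := by
  simp only [wtSum, Finset.sum_apply]
  exact Finset.sum_comm

lemma wtSum_zsmul' {m : ℕ} (c : ℤ) (x : Wt m) : wtSum (c • x) = c * wtSum x := by
  simp only [wtSum, Pi.smul_apply, smul_eq_mul]
  rw [Finset.mul_sum]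

lemma wtSum_comb {m : ℕ} {ι : Type*} [Fintype ι] (c : ι → ℤ) (f : ι → Wt m) :
    wtSum (∑ p, c p • f p) = ∑ p, c p * wtSum (f p) := by
  rw [wtSum_sum']
  exact Finset.sum_congr rfl fun p _ => wtSum_zsmul' (c p) (f p)

lemma wtSum_eps' {m : ℕ} (i : Fin m) : wtSum (eps i) = 1 := by
  simp [wtSum, eps]

lemma wtSum_rootsA {m : ℕ} (p : IdxLT m) : wtSum (rootsA m p) = 0 := by
  simp [rootsA, wtSum, eps, Finset.sum_sub_distrib]

lemma finite_nsum {ι : Type*} [Fintype ι] (d : ℕ) :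
    Finite {n : ι → ℕ // (∑ i, n i) = d} := by
  have hb : ∀ (n : {n : ι → ℕ // (∑ i, n i) = d}) (i : ι), n.1 i < d + 1 := by
    intro n i
    have h := Finset.single_le_sum (f := n.1) (fun j _ => Nat.zero_le _) (Finset.mem_univ i)
    have h2 := n.2
    omega
  exact Finite.of_injective (fun n => fun i => (⟨n.1 i, hb n i⟩ : Fin (d + 1)))
    (fun a b h => Subtype.ext (funext fun i => congrArg Fin.val (congrFun h i)))

lemma finite_nsum' {ι : Type*} [Fintype ι] (d : ℕ) (P : (ι → ℕ) → Prop) :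
    Finite {n : ι → ℕ // (∑ i, n i) = d ∧ P n} := by
  have := finite_nsum (ι := ι) d
  refine Finite.of_injective
    (fun n => (⟨n.1, n.2.1⟩ : {n : ι → ℕ // (∑ i, n i) = d})) ?_
  intro a b h
  have h' := congrArg Subtype.val h
  exact Subtype.ext h'

lemma pq_master {m : ℕ} {κ : Type} [Fintype κ] (w : κ → Wt m)
    (hw : ∀ p, wtSum (w p) = 2) (β : Wt m) (k : ℕ) (hk : wtSum β = 2 * (k : ℤ)) :
    PqPS (Sum.elim (rootsA m) w) (castWt β) =
      ∑ᶠ δ ∈ {δ : Wt m | (∃ e : κ → ℕ, (∑ p, (e p : ℤ) • w p) = δ) ∧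
          wtSum δ = 2 * (k : ℤ)},
        ((Nat.card {e : κ → ℕ // (∑ p, (e p : ℤ) • w p) = δ} : ℤ)) •
          ((PowerSeries.X : PowerSeries ℤ) ^ k * PqA (castWt (β - δ))) := by
  classical
  set S : Set (Wt m) :=
    {δ : Wt m | (∃ e : κ → ℕ, (∑ p, (e p : ℤ) • w p) = δ) ∧ wtSum δ = 2 * (k : ℤ)}
    with hSdef
  have hforce : ∀ (δ : Wt m), wtSum δ = 2 * (k : ℤ) →
      ∀ e : κ → ℕ, (∑ p, (e p : ℤ) • w p) = δ → (∑ p, e p) = k := by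
    intro δ hδ e he
    have h1 : wtSum (∑ p, (e p : ℤ) • w p) = (∑ p, (e p : ℤ)) * 2 := by
      rw [wtSum_comb, Finset.sum_mul]
      exact Finset.sum_congr rfl fun p _ => by rw [hw]
    rw [he, hδ] at h1
    have h2 : (∑ p, (e p : ℤ)) = (k : ℤ) := by linarith
    have h3 : ((∑ p, e p : ℕ) : ℤ) = (k : ℤ) := by push_cast; exact h2
    exact_mod_cast h3
  have hEfin : ∀ δ : Wt m, wtSum δ = 2 * (k : ℤ) →
      Finite {e : κ → ℕ // (∑ p, (e p : ℤ) • w p) = δ} := by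
    intro δ hδ
    have hfin : Finite {e : κ → ℕ // (∑ p, e p) = k} := finite_nsum k
    refine Finite.of_injective
      (fun e => (⟨e.1, hforce δ hδ e.1 e.2⟩ : {e : κ → ℕ // (∑ p, e p) = k})) ?_
    intro a b h
    have h' := congrArg Subtype.val h
    exact Subtype.ext h'
  have hSfin : S.Finite := by
    have h1 : Finite {e : κ → ℕ // (∑ p, e p) = k} := finite_nsum k
    have h2 : ({e : κ → ℕ | (∑ p, e p) = k}).Finite := Set.finite_coe_iff.mpr h1
    refine Set.Finite.subset (h2.image (fun e => ∑ p, (e p : ℤ) • w p)) ?_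
    rintro δ ⟨⟨e, he⟩, hδ⟩
    exact ⟨e, hforce δ hδ e he, he⟩
  rw [finsum_mem_eq_finite_toFinset_sum _ hSfin]
  ext d
  rw [map_sum]
  have split : ∀ n : (IdxLT m ⊕ κ) → ℕ,
      (∑ i, ((n i : ℤ)) • Sum.elim (rootsA m) w i) = β →
      (∑ p : κ, n (Sum.inr p)) = k ∧
      (∑ p : IdxLT m, ((n (Sum.inl p) : ℤ)) • rootsA m p)
        = β - ∑ p : κ, ((n (Sum.inr p) : ℤ)) • w p ∧
      wtSum (∑ p : κ, ((n (Sum.inr p) : ℤ)) • w p) = 2 * (k : ℤ) := by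
    intro n hn
    rw [Fintype.sum_sum_type] at hn
    simp only [Sum.elim_inl, Sum.elim_inr] at hn
    have h2 : (∑ p : IdxLT m, ((n (Sum.inl p) : ℤ)) • rootsA m p)
        = β - ∑ p : κ, ((n (Sum.inr p) : ℤ)) • w p := eq_sub_of_add_eq hn
    have hA : wtSum (∑ p : IdxLT m, ((n (Sum.inl p) : ℤ)) • rootsA m p) = 0 := by
      rw [wtSum_comb]; simp [wtSum_rootsA]
    have h3 : wtSum (∑ p : κ, ((n (Sum.inr p) : ℤ)) • w p) = 2 * (k : ℤ) := by
      have h4 := congrArg wtSum hn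
      rw [wtSum_add', hA, hk] at h4
      linarith
    exact ⟨hforce _ h3 _ rfl, h2, h3⟩
  by_cases hkd : k ≤ d
  · -- main case
    have hco : ∀ δ : Wt m,
        (PowerSeries.coeff d)
          (((Nat.card {e : κ → ℕ // (∑ p, (e p : ℤ) • w p) = δ} : ℤ)) •
            ((PowerSeries.X : PowerSeries ℤ) ^ k * PqA (castWt (β - δ)))) =
        (Nat.card {e : κ → ℕ // (∑ p, (e p : ℤ) • w p) = δ} : ℤ) *
          (Nat.card {nA : IdxLT m → ℕ //
              (∑ p, nA p) = d - k ∧ (∑ p, (nA p : ℤ) • rootsA m p) = β - δ} : ℤ) := by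
      intro δ
      rw [map_smul, smul_eq_mul, PowerSeries.coeff_X_pow_mul', if_pos hkd]
      congr 1
      simp only [PqA, PqPS, PowerSeries.coeff_mk]
      exact congrArg _ (Nat.card_congr (Equiv.subtypeEquivRight (fun nA =>
        and_congr_right fun _ =>
          ⟨fun h => castWt_injective h, fun h => by rw [h]⟩)))
    rw [Finset.sum_congr rfl (fun δ _ => hco δ)]
    simp only [PqPS, PowerSeries.coeff_mk]
    have hAcast : Nat.card {n : (IdxLT m ⊕ κ) → ℕ //
        (∑ i, n i) = d ∧
          castWt (∑ i, (n i : ℤ) • Sum.elim (rootsA m) w i) = castWt β} =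
      Nat.card {n : (IdxLT m ⊕ κ) → ℕ //
        (∑ i, n i) = d ∧ (∑ i, (n i : ℤ) • Sum.elim (rootsA m) w i) = β} :=
      Nat.card_congr (Equiv.subtypeEquivRight fun n =>
        and_congr_right fun _ => ⟨fun h => castWt_injective h, fun h => by rw [h]⟩)
    rw [hAcast]
    set T := hSfin.toFinset with hT
    have hmemS : ∀ δ ∈ T, wtSum δ = 2 * (k : ℤ) :=
      fun δ hδ => ((hSfin.mem_toFinset.mp hδ)).2
    have key : Nat.card {n : (IdxLT m ⊕ κ) → ℕ //
        (∑ i, n i) = d ∧ (∑ i, (n i : ℤ) • Sum.elim (rootsA m) w i) = β} =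
        ∑ δ ∈ T, Nat.card {e : κ → ℕ // (∑ p, (e p : ℤ) • w p) = δ} *
          Nat.card {nA : IdxLT m → ℕ //
            (∑ p, nA p) = d - k ∧ (∑ p, (nA p : ℤ) • rootsA m p) = β - δ} := by
      haveI : Fintype {n : (IdxLT m ⊕ κ) → ℕ //
          (∑ i, n i) = d ∧ (∑ i, (n i : ℤ) • Sum.elim (rootsA m) w i) = β} :=
        @Fintype.ofFinite _ (finite_nsum' d _)
      rw [Nat.card_eq_fintype_card, ← Finset.card_univ,
        Finset.card_eq_sum_card_fiberwise
          (f := fun n : {n : (IdxLT m ⊕ κ) → ℕ //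
              (∑ i, n i) = d ∧ (∑ i, (n i : ℤ) • Sum.elim (rootsA m) w i) = β} =>
            ∑ p : κ, ((n.1 (Sum.inr p) : ℤ)) • w p)
          (t := T)
          (fun n _ => hSfin.mem_toFinset.mpr ⟨⟨_, rfl⟩, (split n.1 n.2.2).2.2⟩)]
      apply Finset.sum_congr rfl
      intro δ hδmem
      rw [← Fintype.card_subtype, ← Nat.card_eq_fintype_card]
      have key1 : ∀ n : (IdxLT m ⊕ κ) → ℕ, (∑ i, n i) = d →
          (∑ i, (n i : ℤ) • Sum.elim (rootsA m) w i) = β →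
          (∑ p : IdxLT m, n (Sum.inl p)) = d - k := by
        intro n hn1 hn2
        have h1 := (split n hn2).1
        rw [Fintype.sum_sum_type] at hn1
        rw [← h1, ← hn1, Nat.add_sub_cancel]
      have key2 : ∀ n : (IdxLT m ⊕ κ) → ℕ,
          (∑ i, (n i : ℤ) • Sum.elim (rootsA m) w i) = β →
          (∑ p : κ, ((n (Sum.inr p) : ℤ)) • w p) = δ →
          (∑ p : IdxLT m, ((n (Sum.inl p) : ℤ)) • rootsA m p) = β - δ := by
        intro n hn2 hδ'
        have h2 := (split n hn2).2.1
        rw [hδ'] at h2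
        exact h2
      have key3 : ∀ (e : κ → ℕ) (nA : IdxLT m → ℕ),
          (∑ p, (e p : ℤ) • w p) = δ → (∑ p, nA p) = d - k →
          (∑ i, Sum.elim nA e i) = d := by
        intro e nA he h1
        have hsk : (∑ p, e p) = k := hforce δ (hmemS δ hδmem) e he
        rw [Fintype.sum_sum_type]
        simp only [Sum.elim_inl, Sum.elim_inr]
        rw [h1, hsk]
        exact Nat.sub_add_cancel hkd
      have key4 : ∀ (e : κ → ℕ) (nA : IdxLT m → ℕ),
          (∑ p, (e p : ℤ) • w p) = δ →
          (∑ p, (nA p : ℤ) • rootsA m p) = β - δ →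
          (∑ i, ((Sum.elim nA e i : ℕ) : ℤ) • Sum.elim (rootsA m) w i) = β := by
        intro e nA he h2
        rw [Fintype.sum_sum_type]
        simp only [Sum.elim_inl, Sum.elim_inr]
        rw [h2, he]
        abel
      have Φ : {n : {n : (IdxLT m ⊕ κ) → ℕ //
            (∑ i, n i) = d ∧ (∑ i, (n i : ℤ) • Sum.elim (rootsA m) w i) = β} //
            (∑ p : κ, ((n.1 (Sum.inr p) : ℤ)) • w p) = δ} ≃
          ({e : κ → ℕ // (∑ p, (e p : ℤ) • w p) = δ} ×
            {nA : IdxLT m → ℕ //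
              (∑ p, nA p) = d - k ∧ (∑ p, (nA p : ℤ) • rootsA m p) = β - δ}) :=
      { toFun := fun n =>
          (⟨fun p => n.1.1 (Sum.inr p), n.2⟩,
           ⟨fun p => n.1.1 (Sum.inl p), key1 n.1.1 n.1.2.1 n.1.2.2,
              key2 n.1.1 n.1.2.2 n.2⟩)
        invFun := fun x =>
          ⟨⟨Sum.elim x.2.1 x.1.1, key3 x.1.1 x.2.1 x.1.2 x.2.2.1,
              key4 x.1.1 x.2.1 x.1.2 x.2.2.2⟩, x.1.2⟩
        left_inv := fun n =>
          Subtype.ext (Subtype.ext (funext fun i => by cases i <;> rfl))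
        right_inv := fun x => rfl }
      rw [Nat.card_congr Φ, Nat.card_prod]
    rw [key]
    push_cast
    rfl
  · -- d < k : both sides vanish
    haveI hempty : IsEmpty {n : (IdxLT m ⊕ κ) → ℕ //
        (∑ i, n i) = d ∧
          castWt (∑ i, (n i : ℤ) • Sum.elim (rootsA m) w i) = castWt β} := by
      constructor
      rintro ⟨n, hn1, hn2⟩
      have hn2' : (∑ i, (n i : ℤ) • Sum.elim (rootsA m) w i) = β := castWt_injective hn2
      have h1 := (split n hn2').1
      rw [Fintype.sum_sum_type] at hn1
      omega
    rw [Finset.sum_eq_zero (fun δ _ => by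
      rw [map_smul, PowerSeries.coeff_X_pow_mul', if_neg hkd, smul_zero])]
    simp only [PqPS, PowerSeries.coeff_mk, map_smul, smul_eq_mul,
      PowerSeries.coeff_X_pow_mul', if_neg hkd, mul_zero, Finset.sum_const_zero]
    rw [Nat.card_of_isEmpty]
    norm_num

end Stmt18Aux

/-- For `β ∈ ℤ^m` with `|β| = 2k ≥ 0`:
`P_q^{C_m}(β) = Σ_{δ∈C_k^m} c_δ^{C_m} q^k P_q^{A_m}(β-δ)` and
`P_q^{D_m}(β) = Σ_{δ∈D_k^m} c_δ^{D_m} q^k P_q^{A_m}(β-δ)`. -/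
theorem stmt18 (m : ℕ) (hm : 1 ≤ m) (β : Wt m) (k : ℕ) (hk : wtSum β = 2 * k) :
    PqG RT.C (castWt β) =
      ∑ᶠ δ ∈ setC m k,
        (cC m δ : ℤ) • ((PowerSeries.X : PowerSeries ℤ) ^ k * PqA (castWt (β - δ))) ∧
    PqG RT.D (castWt β) =
      ∑ᶠ δ ∈ setD m k,
        (cD m δ : ℤ) • ((PowerSeries.X : PowerSeries ℤ) ^ k * PqA (castWt (β - δ))) := by
  constructor
  · have hroots : rootsC m
        = Sum.elim (rootsA m) (fun p : IdxLE m => eps p.1.1 + eps p.1.2) := by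
      funext x; rcases x with p | p <;> rfl
    have hw : ∀ p : IdxLE m, wtSum (eps p.1.1 + eps p.1.2) = 2 := by
      intro p; rw [wtSum_add', wtSum_eps', wtSum_eps']; norm_num
    have h := pq_master (fun p : IdxLE m => eps p.1.1 + eps p.1.2) hw β k hk
    rw [show PqG RT.C (castWt β) = PqPS (rootsC m) (castWt β) from rfl, hroots]
    exact h
  · have hroots : rootsD m
        = Sum.elim (rootsA m) (fun p : IdxLT m => eps p.1.1 + eps p.1.2) := by
      funext x; rcases x with p | p <;> rfl
    have hw : ∀ p : IdxLT m, wtSum (eps p.1.1 + eps p.1.2) = 2 := by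
      intro p; rw [wtSum_add', wtSum_eps', wtSum_eps']; norm_num
    have h := pq_master (fun p : IdxLT m => eps p.1.1 + eps p.1.2) hw β k hk
    rw [show PqG RT.D (castWt β) = PqPS (rootsD m) (castWt β) from rfl, hroots]
    exact h

end
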